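/- Let m ≥ 1 and let R, J : ℝ → Matrix m m ℝ with J twice differentiable, satisfying J''(t) + R(t)·J(t) = 0 for all t ∈ ℝ, with initial conditions J(0) = 0 and J'(0) = I (the identity matrix), and suppose R(t) is a symmetric matrix for every t. Then for every t ∈ ℝ at which J(t) is invertible, the matrix U(t) := J'(t)·J(t)⁻¹ is symmetric, i.e. (J'(t)·J(t)⁻¹)ᵀ = J'(t)·J(t)⁻¹. -/

import Mathlib

open Matrix

attribute [local instance] Matrix.normedAddCommGroup Matrix.normedSpace

noncomputable def mulCLM (m : ℕ) :
    Matrix (Fin m) (Fin m) ℝ →L[ℝ] Matrix (Fin m) (Fin m) ℝ →L[ℝ] Matrix (Fin m) (Fin m) ℝ :=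
  LinearMap.toContinuousLinearMap
    { toFun := fun a => LinearMap.toContinuousLinearMap (LinearMap.mul ℝ _ a),
      map_add' := by intro a b; ext x; simp [add_mul],
      map_smul' := by intro c a; ext x; simp [smul_mul_assoc] }

noncomputable def transCLM (m : ℕ) :
    Matrix (Fin m) (Fin m) ℝ →L[ℝ] Matrix (Fin m) (Fin m) ℝ :=
  LinearMap.toContinuousLinearMap
    { toFun := fun a => aᵀ,
      map_add' := by intro a b; simp [Matrix.transpose_add],
      map_smul' := by intro c a; simp }

theorem hasDerivAt_matmul {m : ℕ} {f g : ℝ → Matrix (Fin m) (Fin m) ℝ}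
    {f' g' : Matrix (Fin m) (Fin m) ℝ} {x : ℝ}
    (hf : HasDerivAt f f' x) (hg : HasDerivAt g g' x) :
    HasDerivAt (fun t => f t * g t) (f' * g x + f x * g') x := by
  have hf1 : ∀ i j, HasDerivAt (fun t => f t i j) (f' i j) x := fun i j =>
    hasDerivAt_pi.1 ((hasDerivAt_pi (φ := fun t => (f t : Fin m → Fin m → ℝ))).1 (by exact hf) i) j
  have hg1 : ∀ i j, HasDerivAt (fun t => g t i j) (g' i j) x := fun i j =>
    hasDerivAt_pi.1 ((hasDerivAt_pi (φ := fun t => (g t : Fin m → Fin m → ℝ))).1 (by exact hg) i) j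
  have h : HasDerivAt (fun t => fun i j => ∑ k, f t i k * g t k j)
      (fun i j => ∑ k, (f' i k * g x k j + f x i k * g' k j)) x :=
    hasDerivAt_pi.2 fun i => hasDerivAt_pi.2 fun j =>
      HasDerivAt.fun_sum fun k _ => (hf1 i k).mul (hg1 k j)
  simp only [Finset.sum_add_distrib] at h
  exact h

theorem hasDerivAt_mattrans {m : ℕ} {f : ℝ → Matrix (Fin m) (Fin m) ℝ}
    {f' : Matrix (Fin m) (Fin m) ℝ} {x : ℝ} (hf : HasDerivAt f f' x) :
    HasDerivAt (fun t => (f t)ᵀ) f'ᵀ x := by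
  have h := (transCLM m).hasFDerivAt.comp_hasDerivAt x (by exact hf)
  simp [transCLM] at h
  exact h

/-- If `J` solves `J'' + R J = 0` on `ℝ` with `J 0 = 0`, `J' 0 = 1`, and `R t` symmetric for all
`t`, then at every `t` where `J t` is invertible the matrix `U t = J' t * (J t)⁻¹` is symmetric. -/
theorem jacobi_U_symmetric
    (m : ℕ) (hm : 1 ≤ m)
    (R J J' J'' : ℝ → Matrix (Fin m) (Fin m) ℝ)
    (hJ : ∀ t : ℝ, HasDerivAt J (J' t) t)
    (hJ' : ∀ t : ℝ, HasDerivAt J' (J'' t) t)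
    (hJacobi : ∀ t : ℝ, J'' t + R t * J t = 0)
    (hJ0 : J 0 = 0) (hJ'0 : J' 0 = 1)
    (hRsym : ∀ t : ℝ, (R t)ᵀ = R t) :
    ∀ t : ℝ, IsUnit (J t) → (J' t * (J t)⁻¹)ᵀ = J' t * (J t)⁻¹ := by
  set W : ℝ → Matrix (Fin m) (Fin m) ℝ :=
    fun t => (J' t)ᵀ * J t - (J t)ᵀ * J' t with hW
  have hJ'' : ∀ t, J'' t = -(R t * J t) := fun t => by
    have := hJacobi t; linear_combination (norm := module) this
  have hWderiv : ∀ t : ℝ, HasDerivAt W 0 t := by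
    intro t
    have h1 := hasDerivAt_matmul (hasDerivAt_mattrans (hJ' t)) (hJ t)
    have h2 := hasDerivAt_matmul (hasDerivAt_mattrans (hJ t)) (hJ' t)
    have := h1.sub h2
    have heq : (J'' t)ᵀ * J t + (J' t)ᵀ * J' t - ((J' t)ᵀ * J' t + (J t)ᵀ * J'' t) = 0 := by
      rw [hJ'' t, Matrix.transpose_neg, Matrix.transpose_mul, hRsym]
      noncomm_ring
    rw [heq] at this
    exact this
  have hWconst : ∀ t : ℝ, W t = W 0 := by
    intro t
    exact is_const_of_deriv_eq_zero (fun x => (hWderiv x).differentiableAt)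
      (fun x => (hWderiv x).deriv) t 0
  have hW0 : W 0 = 0 := by simp [hW, hJ0, hJ'0]
  have hsym : ∀ t : ℝ, (J' t)ᵀ * J t = (J t)ᵀ * J' t := by
    intro t
    have := (hWconst t).trans hW0
    have := sub_eq_zero.mp this
    exact this
  intro t ht
  have hdet : IsUnit (J t).det := (Matrix.isUnit_iff_isUnit_det _).mp ht
  have hdetT : IsUnit (J t)ᵀ.det := by rwa [Matrix.det_transpose]
  have key : (J' t)ᵀ = (J t)ᵀ * J' t * (J t)⁻¹ := by
    have := congrArg (fun A => A * (J t)⁻¹) (hsym t)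
    simpa [Matrix.mul_assoc, Matrix.mul_nonsing_inv _ hdet] using this
  calc (J' t * (J t)⁻¹)ᵀ = ((J t)ᵀ)⁻¹ * (J' t)ᵀ := by
        rw [Matrix.transpose_mul, Matrix.transpose_nonsing_inv]
    _ = ((J t)ᵀ)⁻¹ * ((J t)ᵀ * (J' t * (J t)⁻¹)) := by rw [key, Matrix.mul_assoc]
    _ = J' t * (J t)⁻¹ := by
        rw [← Matrix.mul_assoc, Matrix.nonsing_inv_mul _ hdetT, Matrix.one_mul]
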